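/- Let ε > 0 and define the one-dimensional bilinear operator B_ε(η, ψ)(x) := (4/(πε)) η(a₁(x, μ_ε(x))) ψ(a₂(x, μ_ε(x))) 1_{x ≥ ε^{1/3}}, where a₁(x,μ) = x√((1+μ)/2), a₂(x,μ) = x√((1-μ)/2), μ_ε(x) = 1 - min{2, ε x^{-3}}. Then for 1 ≤ p < ∞, η ∈ L^p(R⁺, x² dx) and ψ ∈ L^∞(R⁺): ‖B_ε(η, ψ)‖_{L^p(R⁺, x² dx)} ≤ (8/(πε)) ‖ψ‖_{L^∞(R⁺)} ‖η‖_{L^p(R⁺, x² dx)}. -/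

import Mathlib

open Real MeasureTheory

/-- The measure `x² dx` on `ℝ⁺ = (0, ∞)`. -/
noncomputable def radMeasure : Measure ℝ :=
  (volume.restrict (Set.Ioi (0:ℝ))).withDensity (fun x => ENNReal.ofReal (x ^ 2))

private lemma cov_1d {s : Set ℝ} {f f' : ℝ → ℝ} (hs : MeasurableSet s)
    (hf' : ∀ x ∈ s, HasDerivWithinAt f (f' x) s x) (hf : Set.InjOn f s) (g : ℝ → ENNReal) :
    ∫⁻ x in f '' s, g x = ∫⁻ x in s, ENNReal.ofReal |f' x| * g (f x) := by
  simpa only [ContinuousLinearMap.det_toSpanSingleton] using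
    lintegral_image_eq_lintegral_abs_det_fderiv_mul volume hs
      (fun x hx => (hf' x hx).hasFDerivWithinAt) hf g

private lemma hasDeriv_f (ε : ℝ) {x : ℝ} (hx : x ≠ 0) :
    HasDerivAt (fun y : ℝ => y ^ 2 - ε / 2 * y⁻¹) (2 * x + ε / 2 * (x ^ 2)⁻¹) x := by
  have h := (hasDerivAt_pow 2 x).sub ((hasDerivAt_inv hx).const_mul (ε / 2))
  convert h using 1
  push_cast
  · rfl
  · rfl
  · rfl
  · ring

private lemma hasDeriv_q (ε : ℝ) {x : ℝ} (hx : x ≠ 0) :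
    HasDerivAt (fun y : ℝ => ε / 2 * y⁻¹) (-(ε / 2 * (x ^ 2)⁻¹)) x := by
  have h := (hasDerivAt_inv hx).const_mul (ε / 2)
  convert h using 1
  · rfl
  · rfl
  · ring

private lemma hasDeriv_F (ε : ℝ) {x : ℝ} (hx : x ≠ 0) (hf : x ^ 2 - ε / 2 * x⁻¹ ≠ 0) :
    HasDerivAt (fun y : ℝ => Real.sqrt (y ^ 2 - ε / 2 * y⁻¹))
      (1 / (2 * Real.sqrt (x ^ 2 - ε / 2 * x⁻¹)) * (2 * x + ε / 2 * (x ^ 2)⁻¹)) x :=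
  (Real.hasDerivAt_sqrt hf).comp x (hasDeriv_f ε hx)

private lemma hasDeriv_G (ε : ℝ) {x : ℝ} (hx : x ≠ 0) (hq : ε / 2 * x⁻¹ ≠ 0) :
    HasDerivAt (fun y : ℝ => Real.sqrt (ε / 2 * y⁻¹))
      (1 / (2 * Real.sqrt (ε / 2 * x⁻¹)) * -(ε / 2 * (x ^ 2)⁻¹)) x :=
  (Real.hasDerivAt_sqrt hq).comp x (hasDeriv_q ε hx)

private lemma jac_key {x A f : ℝ} (hx0 : 0 < x) (hf : 0 < f) (hA : 2 * x ≤ A)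
    (hsq : x / 2 ≤ Real.sqrt f) :
    x ^ 2 ≤ 2 * |1 / (2 * Real.sqrt f) * A| * Real.sqrt f ^ 2 := by
  have hs : 0 < Real.sqrt f := Real.sqrt_pos.mpr hf
  have hA0 : 0 < A := lt_of_lt_of_le (by positivity) hA
  have habs : |1 / (2 * Real.sqrt f) * A| = 1 / (2 * Real.sqrt f) * A :=
    abs_of_pos (by positivity)
  rw [habs]
  have heq : 2 * (1 / (2 * Real.sqrt f) * A) * Real.sqrt f ^ 2 = A * Real.sqrt f := by
    have hss : Real.sqrt f ^ 2 = f := Real.sq_sqrt hf.le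
    field_simp
  rw [heq]
  calc x ^ 2 = 2 * x * (x / 2) := by ring
  _ ≤ A * Real.sqrt f := mul_le_mul hA hsq (by positivity) hA0.le

/-- `‖B_ε(η, ψ)‖_{L^p(ℝ⁺, x²dx)} ≤ (8/(πε)) ‖ψ‖_{L^∞(ℝ⁺)} ‖η‖_{L^p(ℝ⁺, x²dx)}`,
where `B_ε(η,ψ)(x) = (4/(πε)) η(a₁(x, μ_ε(x))) ψ(a₂(x, μ_ε(x))) 1_{x ≥ ε^{1/3}}`. -/
theorem stmt_13 (ε : ℝ) (hε : 0 < ε) (p : ℝ) (hp : 1 ≤ p)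
    (η ψ : ℝ → ℝ) (hη : Measurable η) (hψ : Measurable ψ)
    (hη0 : ∀ x, 0 ≤ η x) (hψ0 : ∀ x, 0 ≤ ψ x)
    (με a₁ a₂ B : ℝ → ℝ)
    (hμε : ∀ x, με x = 1 - min 2 (ε * x ^ (-3 : ℝ)))
    (ha₁ : ∀ x, a₁ x = x * Real.sqrt ((1 + με x) / 2))
    (ha₂ : ∀ x, a₂ x = x * Real.sqrt ((1 - με x) / 2))
    (hB : ∀ x, B x = (4 / (π * ε)) * η (a₁ x) * ψ (a₂ x)
        * (if ε ^ ((1:ℝ)/3) ≤ x then 1 else 0)) :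
    eLpNorm B (ENNReal.ofReal p) radMeasure
      ≤ ENNReal.ofReal (8 / (π * ε)) * eLpNorm ψ ⊤ radMeasure
          * eLpNorm η (ENNReal.ofReal p) radMeasure := by
  have hp0 : 0 < p := lt_of_lt_of_le one_pos hp
  have hπ : 0 < π := Real.pi_pos
  have hc0 : 0 < 4 / (π * ε) := by positivity
  set e3 : ℝ := ε ^ ((1:ℝ)/3) with he3def
  have he3 : 0 < e3 := Real.rpow_pos_of_pos hε _
  set s : Set ℝ := Set.Ici e3 with hsdef
  have hsm : MeasurableSet s := measurableSet_Ici
  have hs_sub : s ⊆ Set.Ioi (0:ℝ) := fun x hx => lt_of_lt_of_le he3 hx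
  -- basic facts on s
  have hcube : ∀ x ∈ s, ε ≤ x ^ 3 := by
    intro x hx
    have h1 : e3 ^ (3:ℕ) = ε := by
      rw [he3def, ← Real.rpow_natCast (ε ^ ((1:ℝ)/3)) 3, ← Real.rpow_mul hε.le]
      norm_num
    calc ε = e3 ^ (3:ℕ) := h1.symm
    _ ≤ x ^ (3:ℕ) := pow_le_pow_left₀ he3.le hx 3
  set F : ℝ → ℝ := fun x => Real.sqrt (x ^ 2 - ε / 2 * x⁻¹) with hFdef
  set G : ℝ → ℝ := fun x => Real.sqrt (ε / 2 * x⁻¹) with hGdef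
  have hhalf : ∀ x ∈ s, ε / 2 * x⁻¹ ≤ x ^ 2 / 2 := by
    intro x hx
    have hx0 : 0 < x := hs_sub hx
    have hxi : 0 < x⁻¹ := inv_pos.mpr hx0
    have h3 : x ^ 3 * x⁻¹ = x ^ 2 := by field_simp
    nlinarith [hcube x hx]
  have hfpos : ∀ x ∈ s, 0 < x ^ 2 - ε / 2 * x⁻¹ := by
    intro x hx
    have hx0 : 0 < x := hs_sub hx
    have := hhalf x hx
    nlinarith
  have hqpos : ∀ x : ℝ, 0 < x → 0 < ε / 2 * x⁻¹ := by
    intro x hx0; positivity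
  -- a₁ = F on s, a₂ = G on s
  have hμεs : ∀ x ∈ s, με x = 1 - ε / x ^ 3 := by
    intro x hx
    have hx0 : 0 < x := hs_sub hx
    have hxr : x ^ (-3:ℝ) = (x ^ 3)⁻¹ := by
      rw [show (-3:ℝ) = -((3:ℕ):ℝ) by norm_num, Real.rpow_neg hx0.le, Real.rpow_natCast]
    rw [hμε, hxr, ← div_eq_mul_inv, min_eq_right]
    have h3 : 0 < x ^ 3 := by positivity
    rw [div_le_iff₀ h3]
    nlinarith [hcube x hx]
  have ha₁F : ∀ x ∈ s, a₁ x = F x := by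
    intro x hx
    have hx0 : 0 < x := hs_sub hx
    have h1 : (1 + με x) / 2 = (x ^ 2 - ε / 2 * x⁻¹) / x ^ 2 := by
      rw [hμεs x hx]
      field_simp
      ring
    rw [ha₁, h1, hFdef]
    rw [show x * Real.sqrt ((x ^ 2 - ε / 2 * x⁻¹) / x ^ 2)
        = Real.sqrt (x ^ 2) * Real.sqrt ((x ^ 2 - ε / 2 * x⁻¹) / x ^ 2) by
      rw [Real.sqrt_sq hx0.le]]
    rw [← Real.sqrt_mul (sq_nonneg x)]
    congr 1
    field_simp
  have ha₂G : ∀ x ∈ s, a₂ x = G x := by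
    intro x hx
    have hx0 : 0 < x := hs_sub hx
    have h1 : (1 - με x) / 2 = (ε / 2 * x⁻¹) / x ^ 2 := by
      rw [hμεs x hx]
      field_simp
      ring
    rw [ha₂, h1, hGdef]
    rw [show x * Real.sqrt ((ε / 2 * x⁻¹) / x ^ 2)
        = Real.sqrt (x ^ 2) * Real.sqrt ((ε / 2 * x⁻¹) / x ^ 2) by
      rw [Real.sqrt_sq hx0.le]]
    rw [← Real.sqrt_mul (sq_nonneg x)]
    congr 1
    field_simp
  -- derivatives
  set F' : ℝ → ℝ := fun x => 1 / (2 * Real.sqrt (x ^ 2 - ε / 2 * x⁻¹)) * (2 * x + ε / 2 * (x ^ 2)⁻¹) with hF'def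
  set G' : ℝ → ℝ := fun x => 1 / (2 * Real.sqrt (ε / 2 * x⁻¹)) * -(ε / 2 * (x ^ 2)⁻¹) with hG'def
  have hFd : ∀ x ∈ s, HasDerivWithinAt F (F' x) s x := fun x hx =>
    (hasDeriv_F ε (hs_sub hx).ne' (hfpos x hx).ne').hasDerivWithinAt
  have hGd : ∀ x ∈ s, HasDerivWithinAt G (G' x) s x := fun x hx =>
    (hasDeriv_G ε (hs_sub hx).ne' (hqpos x (hs_sub hx)).ne').hasDerivWithinAt
  -- injectivity
  have hFinj : Set.InjOn F s := by
    have hmono : StrictMonoOn F s := by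
      intro x hx y hy hxy
      have hx0 : 0 < x := hs_sub hx
      have hy0 : 0 < y := hs_sub hy
      apply Real.sqrt_lt_sqrt (hfpos x hx).le
      have hinv : y⁻¹ < x⁻¹ := by
        rw [inv_lt_inv₀ hy0 hx0]
        exact hxy
      nlinarith
    exact hmono.injOn
  have hGinj : Set.InjOn G s := by
    have hanti : StrictAntiOn G s := by
      intro x hx y hy hxy
      have hx0 : 0 < x := hs_sub hx
      have hy0 : 0 < y := hs_sub hy
      apply Real.sqrt_lt_sqrt (by positivity)
      have hinv : y⁻¹ < x⁻¹ := by
        rw [inv_lt_inv₀ hy0 hx0]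
        exact hxy
      nlinarith
    exact hanti.injOn
  -- images
  have hFim : F '' s ⊆ Set.Ioi 0 := by
    rintro _ ⟨x, hx, rfl⟩
    exact Real.sqrt_pos.mpr (hfpos x hx)
  have hGim : G '' s ⊆ Set.Ioi 0 := by
    rintro _ ⟨x, hx, rfl⟩
    exact Real.sqrt_pos.mpr (hqpos x (hs_sub hx))
  -- Jacobian inequality
  have hjac : ∀ x ∈ s, x ^ 2 ≤ 2 * |F' x| * F x ^ 2 := by
    intro x hx
    have hx0 : 0 < x := hs_sub hx
    have hf := hfpos x hx
    have hsqge : x / 2 ≤ Real.sqrt (x ^ 2 - ε / 2 * x⁻¹) := by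
      rw [show x / 2 = Real.sqrt ((x / 2) ^ 2) from (Real.sqrt_sq (by positivity)).symm]
      exact Real.sqrt_le_sqrt (by nlinarith [hhalf x hx])
    have hA : 2 * x ≤ 2 * x + ε / 2 * (x ^ 2)⁻¹ := by
      have : (0:ℝ) < ε / 2 * (x ^ 2)⁻¹ := by positivity
      linarith
    simpa only [hF'def, hFdef] using jac_key hx0 hf hA hsqge
  -- measurability
  have hFm : Measurable F := ((measurable_id.pow_const 2).sub (measurable_inv.const_mul (ε / 2))).sqrt
  have hGm : Measurable G := (measurable_inv.const_mul (ε / 2)).sqrt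
  have hG'm : Measurable G' := by
    rw [hG'def]
    exact (measurable_const.div (hGm.const_mul 2)).mul
      (((measurable_id.pow_const 2).inv.const_mul (ε / 2)).neg)
  have hμεm : Measurable με := by
    have : με = fun x => 1 - min 2 (ε * x ^ (-3:ℝ)) := funext hμε
    rw [this]
    exact measurable_const.sub (measurable_const.min ((measurable_id.pow_const _).const_mul ε))
  have ha₁m : Measurable a₁ := by
    have : a₁ = fun x => x * Real.sqrt ((1 + με x) / 2) := funext ha₁
    rw [this]
    exact measurable_id.mul ((hμεm.const_add 1).div_const 2).sqrt
  have ha₂m : Measurable a₂ := by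
    have : a₂ = fun x => x * Real.sqrt ((1 - με x) / 2) := funext ha₂
    rw [this]
    exact measurable_id.mul ((hμεm.const_sub 1).div_const 2).sqrt
  have hBm : Measurable B := by
    have : B = fun x => (4 / (π * ε)) * η (a₁ x) * ψ (a₂ x)
        * (if ε ^ ((1:ℝ)/3) ≤ x then 1 else 0) := funext hB
    rw [this]
    exact ((measurable_const.mul (hη.comp ha₁m)).mul (hψ.comp ha₂m)).mul
      (Measurable.ite measurableSet_Ici measurable_const measurable_const)
  -- essential sup bound for ψ ∘ G
  set N := eLpNormEssSup ψ radMeasure with hNdef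
  have hψN : ∀ᵐ x ∂(volume.restrict s), (‖ψ (G x)‖₊ : ENNReal) ≤ N := by
    set T : Set ℝ := {y | N < (‖ψ y‖₊ : ENNReal)} with hTdef
    have hTm : MeasurableSet T := measurableSet_lt measurable_const hψ.enorm
    have hTrad : radMeasure T = 0 := by
      have h := enorm_ae_le_eLpNormEssSup ψ radMeasure
      rw [ae_iff] at h
      simpa [hTdef, not_le, enorm_eq_nnnorm] using h
    have hA : volume (T ∩ Set.Ioi 0) = 0 := by
      have h1 : ∫⁻ y in T ∩ Set.Ioi 0, ENNReal.ofReal (y ^ 2) = 0 := by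
        rw [← Measure.restrict_restrict hTm]
        rw [radMeasure, withDensity_apply _ hTm] at hTrad
        exact hTrad
      have h2 := (setLIntegral_eq_zero_iff (hTm.inter measurableSet_Ioi)
        ((measurable_id.pow_const 2).ennreal_ofReal)).mp h1
      rw [measure_eq_zero_iff_ae_notMem]
      filter_upwards [h2] with y hy
      intro hmem
      have h3 := hy hmem
      have hy0 : 0 < y := hmem.2
      rw [ENNReal.ofReal_eq_zero] at h3
      simp only [id] at h3
      nlinarith
    have hmeas' : Measurable fun x => ENNReal.ofReal |G' x| * (T ∩ Set.Ioi 0).indicator 1 (G x) :=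
      (hG'm.abs.ennreal_ofReal).mul ((measurable_one.indicator (hTm.inter measurableSet_Ioi)).comp hGm)
    have hzero : ∫⁻ x in s, ENNReal.ofReal |G' x| * (T ∩ Set.Ioi 0).indicator 1 (G x) = 0 := by
      rw [← cov_1d hsm hGd hGinj]
      refine le_antisymm ?_ zero_le
      calc ∫⁻ y in G '' s, (T ∩ Set.Ioi 0).indicator 1 y
          ≤ ∫⁻ y, (T ∩ Set.Ioi 0).indicator 1 y := setLIntegral_le_lintegral _ _
      _ = volume (T ∩ Set.Ioi 0) := lintegral_indicator_one (hTm.inter measurableSet_Ioi)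
      _ = 0 := hA
    have h3 := (setLIntegral_eq_zero_iff hsm hmeas').mp hzero
    filter_upwards [ae_restrict_of_ae h3, ae_restrict_mem hsm] with x hx hxs
    replace hx := hx hxs
    have hG'ne : G' x ≠ 0 := by
      have hneg : G' x < 0 := by
        rw [hG'def]
        apply mul_neg_of_pos_of_neg
        · have : 0 < Real.sqrt (ε / 2 * x⁻¹) := Real.sqrt_pos.mpr (hqpos x (hs_sub hxs))
          positivity
        · have hx0 : 0 < x := hs_sub hxs
          have : (0:ℝ) < ε / 2 * (x ^ 2)⁻¹ := by positivity
          linarith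
      exact hneg.ne
    have hind : (T ∩ Set.Ioi 0).indicator (1 : ℝ → ENNReal) (G x) = 0 := by
      rcases mul_eq_zero.mp hx with h | h
      · exact absurd h (by simp [ENNReal.ofReal_eq_zero, abs_pos.mpr hG'ne, le_abs, abs_nonneg,
          not_le, abs_pos, hG'ne])
      · exact h
    have hGmem : G x ∈ Set.Ioi 0 := Real.sqrt_pos.mpr (hqpos x (hs_sub hxs))
    by_contra hcon
    rw [not_le] at hcon
    have : G x ∈ T ∩ Set.Ioi 0 := ⟨hcon, hGmem⟩
    rw [Set.indicator_of_mem this] at hind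
    simp at hind
  -- main constants
  set c := ENNReal.ofReal (4 / (π * ε)) with hcdef
  set I := ∫⁻ y in Set.Ioi 0, ENNReal.ofReal (y ^ 2) * (‖η y‖₊ : ENNReal) ^ p with hIdef
  have hηFm : Measurable fun x => ENNReal.ofReal (x ^ 2) * (‖η (F x)‖₊ : ENNReal) ^ p :=
    ((measurable_id.pow_const 2).ennreal_ofReal).mul ((hη.comp hFm).enorm.pow_const p)
  have hCoV : ∫⁻ x in s, ENNReal.ofReal (x ^ 2) * (‖η (F x)‖₊ : ENNReal) ^ p ≤ 2 * I := by
    have step1 : ∫⁻ x in s, ENNReal.ofReal (x ^ 2) * (‖η (F x)‖₊ : ENNReal) ^ p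
        ≤ ∫⁻ x in s, ENNReal.ofReal |F' x|
            * (2 * (ENNReal.ofReal (F x ^ 2) * (‖η (F x)‖₊ : ENNReal) ^ p)) := by
      apply setLIntegral_mono' hsm
      intro x hx
      have h1 : ENNReal.ofReal (x ^ 2) ≤ ENNReal.ofReal (2 * |F' x| * F x ^ 2) :=
        ENNReal.ofReal_le_ofReal (hjac x hx)
      calc ENNReal.ofReal (x ^ 2) * (‖η (F x)‖₊ : ENNReal) ^ p
          ≤ ENNReal.ofReal (2 * |F' x| * F x ^ 2) * (‖η (F x)‖₊ : ENNReal) ^ p :=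
            mul_le_mul_left h1 _
      _ = ENNReal.ofReal |F' x| * (2 * (ENNReal.ofReal (F x ^ 2) * (‖η (F x)‖₊ : ENNReal) ^ p)) := by
          rw [ENNReal.ofReal_mul (by positivity), ENNReal.ofReal_mul (by norm_num)]
          rw [show ENNReal.ofReal 2 = 2 by norm_num]
          ring
    have step2 : ∫⁻ x in s, ENNReal.ofReal |F' x|
            * (2 * (ENNReal.ofReal (F x ^ 2) * (‖η (F x)‖₊ : ENNReal) ^ p))
        = ∫⁻ y in F '' s, 2 * (ENNReal.ofReal (y ^ 2) * (‖η y‖₊ : ENNReal) ^ p) :=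
      (cov_1d hsm hFd hFinj (fun y => 2 * (ENNReal.ofReal (y ^ 2) * (‖η y‖₊ : ENNReal) ^ p))).symm
    have step3 : ∫⁻ y in F '' s, 2 * (ENNReal.ofReal (y ^ 2) * (‖η y‖₊ : ENNReal) ^ p)
        ≤ ∫⁻ y in Set.Ioi 0, 2 * (ENNReal.ofReal (y ^ 2) * (‖η y‖₊ : ENNReal) ^ p) :=
      lintegral_mono_set hFim
    have step4 : ∫⁻ y in Set.Ioi 0, 2 * (ENNReal.ofReal (y ^ 2) * (‖η y‖₊ : ENNReal) ^ p)
        = 2 * I := by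
      rw [hIdef]
      exact lintegral_const_mul' 2 _ (by norm_num)
    calc _ ≤ _ := step1
    _ = _ := step2
    _ ≤ _ := step3
    _ = 2 * I := step4
  -- pointwise bound for B
  have hmain : ∀ᵐ x ∂(volume.restrict (Set.Ioi 0)),
      ENNReal.ofReal (x ^ 2) * (‖B x‖₊ : ENNReal) ^ p
        ≤ s.indicator (fun x => (c * N) ^ p
            * (ENNReal.ofReal (x ^ 2) * (‖η (F x)‖₊ : ENNReal) ^ p)) x := by
    filter_upwards [ae_restrict_of_ae ((ae_restrict_iff' hsm).mp hψN)] with x hxψ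
    by_cases hxs : x ∈ s
    · rw [Set.indicator_of_mem hxs]
      have hBx : B x = 4 / (π * ε) * η (F x) * ψ (G x) := by
        have hxle : e3 ≤ x := Set.mem_Ici.mp hxs
        rw [hB, if_pos hxle, mul_one, ha₁F x hxs, ha₂G x hxs]
      have hnorm : (‖B x‖₊ : ENNReal)
          = c * (‖η (F x)‖₊ : ENNReal) * (‖ψ (G x)‖₊ : ENNReal) := by
        rw [hBx, nnnorm_mul, nnnorm_mul, ENNReal.coe_mul, ENNReal.coe_mul,
          ← enorm_eq_nnnorm (4 / (π * ε)), Real.enorm_eq_ofReal hc0.le, hcdef]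
      have hle : (‖B x‖₊ : ENNReal) ≤ c * N * (‖η (F x)‖₊ : ENNReal) := by
        rw [hnorm]
        calc c * (‖η (F x)‖₊ : ENNReal) * (‖ψ (G x)‖₊ : ENNReal)
            ≤ c * (‖η (F x)‖₊ : ENNReal) * N := mul_le_mul_right (hxψ hxs) _
        _ = c * N * (‖η (F x)‖₊ : ENNReal) := by ring
      calc ENNReal.ofReal (x ^ 2) * (‖B x‖₊ : ENNReal) ^ p
          ≤ ENNReal.ofReal (x ^ 2) * (c * N * (‖η (F x)‖₊ : ENNReal)) ^ p :=
            mul_le_mul_right (ENNReal.rpow_le_rpow hle hp0.le) _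
      _ = (c * N) ^ p * (ENNReal.ofReal (x ^ 2) * (‖η (F x)‖₊ : ENNReal) ^ p) := by
          rw [ENNReal.mul_rpow_of_nonneg _ _ hp0.le]
          ring
    · rw [Set.indicator_of_notMem hxs]
      have hBx : B x = 0 := by
        rw [hB, if_neg (fun h => hxs (Set.mem_Ici.mpr h)), mul_zero]
      simp [hBx, ENNReal.zero_rpow_of_pos hp0]
  -- assembling
  set P := ENNReal.ofReal p with hPdef
  have hP0 : P ≠ 0 := by
    simp only [hPdef, ne_eq, ENNReal.ofReal_eq_zero, not_le]
    exact hp0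
  have hPt : P ≠ ⊤ := ENNReal.ofReal_ne_top
  have hPr : P.toReal = p := ENNReal.toReal_ofReal hp0.le
  have hLB : eLpNorm B P radMeasure
      = (∫⁻ x in Set.Ioi 0, ENNReal.ofReal (x ^ 2) * (‖B x‖₊ : ENNReal) ^ p) ^ (1/p) := by
    rw [eLpNorm_eq_lintegral_rpow_enorm_toReal hP0 hPt, hPr, radMeasure,
      lintegral_withDensity_eq_lintegral_mul _
        (show Measurable fun x : ℝ => ENNReal.ofReal (x ^ 2) from
          (measurable_id.pow_const 2).ennreal_ofReal)
        (hBm.enorm.pow_const p)]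
    rfl
  have hLη : eLpNorm η P radMeasure = I ^ (1/p) := by
    rw [eLpNorm_eq_lintegral_rpow_enorm_toReal hP0 hPt, hPr, radMeasure,
      lintegral_withDensity_eq_lintegral_mul _
        (show Measurable fun x : ℝ => ENNReal.ofReal (x ^ 2) from
          (measurable_id.pow_const 2).ennreal_ofReal)
        (hη.enorm.pow_const p), hIdef]
    rfl
  rw [hLB, eLpNorm_exponent_top, ← hNdef, hLη]
  calc (∫⁻ x in Set.Ioi 0, ENNReal.ofReal (x ^ 2) * (‖B x‖₊ : ENNReal) ^ p) ^ (1/p)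
      ≤ ((c * N) ^ p * (2 * I)) ^ (1/p) := by
        apply ENNReal.rpow_le_rpow _ (by positivity)
        calc ∫⁻ x in Set.Ioi 0, ENNReal.ofReal (x ^ 2) * (‖B x‖₊ : ENNReal) ^ p
            ≤ ∫⁻ x in Set.Ioi 0, s.indicator (fun x => (c * N) ^ p
                * (ENNReal.ofReal (x ^ 2) * (‖η (F x)‖₊ : ENNReal) ^ p)) x :=
              lintegral_mono_ae hmain
        _ = ∫⁻ x in s, (c * N) ^ p * (ENNReal.ofReal (x ^ 2) * (‖η (F x)‖₊ : ENNReal) ^ p) := by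
            rw [lintegral_indicator hsm, Measure.restrict_restrict hsm,
              Set.inter_eq_left.mpr hs_sub]
        _ = (c * N) ^ p * ∫⁻ x in s, ENNReal.ofReal (x ^ 2) * (‖η (F x)‖₊ : ENNReal) ^ p :=
            lintegral_const_mul _ hηFm
        _ ≤ (c * N) ^ p * (2 * I) := mul_le_mul_right hCoV _
  _ = (c * N) * ((2:ENNReal) ^ (1/p) * I ^ (1/p)) := by
      rw [ENNReal.mul_rpow_of_nonneg _ _ (by positivity : (0:ℝ) ≤ 1/p),
        ENNReal.mul_rpow_of_nonneg _ _ (by positivity : (0:ℝ) ≤ 1/p),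
        ← ENNReal.rpow_mul, mul_one_div_cancel hp0.ne', ENNReal.rpow_one]
  _ ≤ (c * N) * (2 * I ^ (1/p)) := by
      apply mul_le_mul_right
      apply mul_le_mul_left
      calc (2:ENNReal) ^ (1/p) ≤ (2:ENNReal) ^ (1:ℝ) :=
          ENNReal.rpow_le_rpow_of_exponent_le (by norm_num) ((div_le_one hp0).mpr hp)
      _ = 2 := ENNReal.rpow_one 2
  _ = ENNReal.ofReal (8 / (π * ε)) * N * I ^ (1/p) := by
      have h2 : c * 2 = ENNReal.ofReal (8 / (π * ε)) := by
        rw [hcdef, show (2:ENNReal) = ENNReal.ofReal 2 by norm_num,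
          ← ENNReal.ofReal_mul hc0.le]
        congr 1
        ring
      rw [← h2]
      ring
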